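/- There exists a constant c₁ > 0, depending only on α and d, such that for every w ∈ ℤ^d, every real R ≥ 1, every x ∈ B(w,R), and every real r ∈ [1, R], one has V(w,R) ≤ c₁ · (R/r)^{c₁} · V(x,r). In particular, V(w,R) ≤ c₁ · R^{c₁} · ν_x for every x ∈ B(w,R). -/

import Mathlib

open scoped BigOperators

/-- ℓ∞ norm on ℤ^d, as a natural number. -/
def linf {d : ℕ} (x : Fin d → ℤ) : ℕ :=
  Finset.univ.sup fun i => (x i).natAbs

/-- ℓ¹ norm on ℤ^d, as a natural number. -/
def l1 {d : ℕ} (x : Fin d → ℤ) : ℕ :=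
  ∑ i, (x i).natAbs

/-- `ν x = (max(|x|,1))^α`. -/
noncomputable def nu (α : ℝ) {d : ℕ} (x : Fin d → ℤ) : ℝ :=
  ((max (linf x) 1 : ℕ) : ℝ) ^ α

/-- The conductance `μ x y = (max(|x|,|y|))^(-α)` if `|x-y|₁ = 1`, and `0` otherwise. -/
noncomputable def mu (α : ℝ) {d : ℕ} (x y : Fin d → ℤ) : ℝ :=
  if l1 (x - y) = 1 then ((max (linf x) (linf y) : ℕ) : ℝ) ^ (-α) else 0

/-- `z 0, …, z m` is a path: consecutive points are at ℓ¹-distance one. -/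
def IsPath {d : ℕ} (z : ℕ → Fin d → ℤ) (m : ℕ) : Prop :=
  ∀ i < m, l1 (z (i + 1) - z i) = 1

/-- The metric `ρ(x,y)`: `0` if `x = y`, otherwise the infimum of `∑ ν (z i)` over
paths from `x` to `y`. -/
noncomputable def rho (α : ℝ) {d : ℕ} (x y : Fin d → ℤ) : ℝ :=
  if x = y then 0
  else sInf {S : ℝ | ∃ (m : ℕ) (z : ℕ → Fin d → ℤ), IsPath z m ∧ z 0 = x ∧ z m = y ∧
    S = ∑ i ∈ Finset.range (m + 1), nu α (z i)}

/-- `ρ_x(r) = (max(|x|,r))^α · r`. -/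
noncomputable def rhox (α : ℝ) {d : ℕ} (x : Fin d → ℤ) (r : ℝ) : ℝ :=
  (max ((linf x : ℕ) : ℝ) r) ^ α * r

/-- `ρ_x⁻¹(r) = (max(|x|, r^{1/(1+α)}))^{-α} · r`, the inverse function of `ρ_x`. -/
noncomputable def rhoxInv (α : ℝ) {d : ℕ} (x : Fin d → ℤ) (r : ℝ) : ℝ :=
  (max ((linf x : ℕ) : ℝ) (r ^ (1 / (1 + α)))) ^ (-α) * r

/-- `V(x,r) = ν(B(x,r))`, the ν-volume of the ℓ∞-ball of radius `r` about `x`. -/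
noncomputable def V (α : ℝ) {d : ℕ} (x : Fin d → ℤ) (r : ℝ) : ℝ :=
  ∑' y : {y : Fin d → ℤ // ((linf (y - x) : ℕ) : ℝ) ≤ r}, nu α y.1

/-- `V_ρ(x,r) = ν(B_ρ(x,r))`, the ν-volume of the ρ-ball of radius `r` about `x`. -/
noncomputable def Vrho (α : ℝ) {d : ℕ} (x : Fin d → ℤ) (r : ℝ) : ℝ :=
  ∑' y : {y : Fin d → ℤ // rho α x y ≤ r}, nu α y.1

section aux
variable {d : ℕ}

lemma linf_le_iff {z : Fin d → ℤ} {n : ℕ} : linf z ≤ n ↔ ∀ i, (z i).natAbs ≤ n := by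
  simp [linf, Finset.sup_le_iff]

lemma le_linf (z : Fin d → ℤ) (i : Fin d) : (z i).natAbs ≤ linf z := by
  unfold linf
  exact Finset.le_sup (f := fun i => (z i).natAbs) (Finset.mem_univ i)

lemma linf_add_le (u v : Fin d → ℤ) : linf (u + v) ≤ linf u + linf v := by
  rw [linf_le_iff]
  intro i
  calc ((u + v) i).natAbs = (u i + v i).natAbs := rfl
    _ ≤ (u i).natAbs + (v i).natAbs := Int.natAbs_add_le _ _
    _ ≤ linf u + linf v := add_le_add (le_linf u i) (le_linf v i)

lemma linf_sub_comm (u v : Fin d → ℤ) : linf (u - v) = linf (v - u) := by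
  unfold linf
  congr 1
  funext i
  simp only [Pi.sub_apply]
  omega

lemma nu_nonneg (α : ℝ) (y : Fin d → ℤ) : 0 ≤ nu α y :=
  Real.rpow_nonneg (by positivity) _

lemma one_le_M (y : Fin d → ℤ) : (1 : ℝ) ≤ ((max (linf y) 1 : ℕ) : ℝ) := by
  exact_mod_cast le_max_right (linf y) 1

noncomputable def box (x : Fin d → ℤ) (n : ℕ) : Finset (Fin d → ℤ) :=
  Finset.Icc (fun i => x i - n) (fun i => x i + n)

lemma mem_box {x y : Fin d → ℤ} {n : ℕ} : y ∈ box x n ↔ linf (y - x) ≤ n := by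
  rw [box, Finset.mem_Icc, linf_le_iff]
  constructor
  · rintro ⟨h1, h2⟩ i
    have a1 : x i - (n : ℤ) ≤ y i := h1 i
    have a2 : y i ≤ x i + (n : ℤ) := h2 i
    simp only [Pi.sub_apply]
    omega
  · intro h
    constructor <;> intro i
    · show x i - (n : ℤ) ≤ y i
      have := h i
      simp only [Pi.sub_apply] at this
      omega
    · show y i ≤ x i + (n : ℤ)
      have := h i
      simp only [Pi.sub_apply] at this
      omega

lemma card_box (x : Fin d → ℤ) (n : ℕ) : (box x n).card = (2 * n + 1) ^ d := by
  rw [box, Pi.card_Icc]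
  have h : ∀ i : Fin d, (Finset.Icc (x i - n) (x i + n)).card = 2 * n + 1 := by
    intro i
    rw [Int.card_Icc]
    omega
  rw [Finset.prod_congr rfl fun i _ => h i, Finset.prod_const, Finset.card_univ,
    Fintype.card_fin]

lemma V_eq (α : ℝ) (x : Fin d → ℤ) (r : ℝ) (hr : 0 ≤ r) :
    V α x r = ∑ y ∈ box x ⌊r⌋₊, nu α y := by
  have h : {y : Fin d → ℤ | ((linf (y - x) : ℕ) : ℝ) ≤ r} = ↑(box x ⌊r⌋₊) := by
    ext y
    simp only [Set.mem_setOf_eq, Finset.coe_sort_coe, Finset.mem_coe, mem_box,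
      ← Nat.le_floor_iff hr]
  calc V α x r
      = ∑' y, Set.indicator {y : Fin d → ℤ | ((linf (y - x) : ℕ) : ℝ) ≤ r} (nu α) y :=
        tsum_subtype _ _
    _ = ∑' y, Set.indicator (↑(box x ⌊r⌋₊) : Set (Fin d → ℤ)) (nu α) y := by rw [h]
    _ = ∑ y ∈ box x ⌊r⌋₊, nu α y := by
        rw [← tsum_subtype]
        exact Finset.tsum_subtype _ _

lemma V_nonneg (α : ℝ) (x : Fin d → ℤ) (r : ℝ) (hr : 0 ≤ r) : 0 ≤ V α x r := by
  rw [V_eq α x r hr]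
  exact Finset.sum_nonneg fun y _ => nu_nonneg α y

end aux

section estimates
variable {d : ℕ}

lemma LB_nonpos {α : ℝ} (hα : α ≤ 0) (x : Fin d → ℤ) (r : ℝ) (hr : 1 ≤ r) :
    r ^ d * (max ((linf x : ℕ) : ℝ) r) ^ α ≤ V α x r := by
  classical
  set q : ℝ := max ((linf x : ℕ) : ℝ) r with hqdef
  have hq1 : (1 : ℝ) ≤ q := le_trans hr (le_max_right _ _)
  set n : ℕ := ⌊r⌋₊ with hn
  have hn1 : 1 ≤ n := Nat.le_floor (by exact_mod_cast hr)
  have hnr : (n : ℝ) ≤ r := Nat.floor_le (by linarith)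
  have hrn : r < (n : ℝ) + 1 := Nat.lt_floor_add_one r
  set a : Fin d → ℤ := fun i => if 0 ≤ x i then x i - n else x i with ha
  set b : Fin d → ℤ := fun i => if 0 ≤ x i then x i else x i + n with hb
  have hsub : Finset.Icc a b ⊆ box x n := by
    intro y hy
    rw [Finset.mem_Icc] at hy
    rw [mem_box, linf_le_iff]
    intro i
    have a1 : a i ≤ y i := hy.1 i
    have a2 : y i ≤ b i := hy.2 i
    simp only [ha, hb] at a1 a2
    simp only [Pi.sub_apply]
    split_ifs at a1 a2 <;> omega
  have hval : ∀ y ∈ Finset.Icc a b, q ^ α ≤ nu α y := by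
    intro y hy
    rw [Finset.mem_Icc] at hy
    have hMn : max (linf y) 1 ≤ max (linf x) n := by
      have hly : linf y ≤ max (linf x) n := by
        rw [linf_le_iff]
        intro i
        have a1 : a i ≤ y i := hy.1 i
        have a2 : y i ≤ b i := hy.2 i
        have hx := le_linf x i
        simp only [ha, hb] at a1 a2
        split_ifs at a1 a2 <;> omega
      omega
    have hMr : ((max (linf y) 1 : ℕ) : ℝ) ≤ q := by
      have h2 : ((max (linf x) n : ℕ) : ℝ) ≤ q := by
        rw [Nat.cast_max]
        exact max_le (le_max_left _ _) (le_trans hnr (le_max_right _ _))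
      exact le_trans (by exact_mod_cast hMn) h2
    rw [nu]
    exact Real.rpow_le_rpow_of_nonpos (lt_of_lt_of_le zero_lt_one (one_le_M y)) hMr hα
  have hcard : (Finset.Icc a b).card = (n + 1) ^ d := by
    rw [Pi.card_Icc]
    have h : ∀ i : Fin d, (Finset.Icc (a i) (b i)).card = n + 1 := by
      intro i
      rw [Int.card_Icc]
      simp only [ha, hb]
      split_ifs <;> omega
    rw [Finset.prod_congr rfl fun i _ => h i, Finset.prod_const, Finset.card_univ,
      Fintype.card_fin]
  calc r ^ d * q ^ α ≤ ((n : ℝ) + 1) ^ d * q ^ α := by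
        have h0 : (0 : ℝ) ≤ r := by linarith
        exact mul_le_mul_of_nonneg_right (pow_le_pow_left₀ h0 (le_of_lt hrn) d)
          (Real.rpow_nonneg (by linarith) α)
    _ ≤ ∑ y ∈ Finset.Icc a b, nu α y := by
        have h := Finset.card_nsmul_le_sum (Finset.Icc a b) (nu α) (q ^ α) hval
        rw [hcard, nsmul_eq_mul] at h
        push_cast at h
        exact h
    _ ≤ ∑ y ∈ box x n, nu α y :=
        Finset.sum_le_sum_of_subset_of_nonneg hsub (fun y _ _ => nu_nonneg α y)
    _ = V α x r := (V_eq α x r (by linarith)).symm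

lemma LB_nonneg {α : ℝ} (hα : 0 ≤ α) (hd : 1 ≤ d) (x : Fin d → ℤ) (r : ℝ) (hr : 1 ≤ r) :
    (r / 4) ^ d * (max ((linf x : ℕ) : ℝ) r / 4) ^ α ≤ V α x r := by
  classical
  set q : ℝ := max ((linf x : ℕ) : ℝ) r with hqdef
  have hq1 : (1 : ℝ) ≤ q := le_trans hr (le_max_right _ _)
  set n : ℕ := ⌊r⌋₊ with hn
  have hn1 : 1 ≤ n := Nat.le_floor (by exact_mod_cast hr)
  have hnr : (n : ℝ) ≤ r := Nat.floor_le (by linarith)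
  have hrn : r < (n : ℝ) + 1 := Nat.lt_floor_add_one r
  set a : Fin d → ℤ := fun i => if 0 ≤ x i then x i + ((n / 2 + 1 : ℕ) : ℤ) else x i - n with ha
  set b : Fin d → ℤ := fun i => if 0 ≤ x i then x i + n else x i - ((n / 2 + 1 : ℕ) : ℤ) with hb
  have hsub : Finset.Icc a b ⊆ box x n := by
    intro y hy
    rw [Finset.mem_Icc] at hy
    rw [mem_box, linf_le_iff]
    intro i
    have a1 : a i ≤ y i := hy.1 i
    have a2 : y i ≤ b i := hy.2 i
    simp only [ha, hb] at a1 a2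
    simp only [Pi.sub_apply]
    split_ifs at a1 a2 <;> omega
  have hval : ∀ y ∈ Finset.Icc a b, (q / 4) ^ α ≤ nu α y := by
    intro y hy
    rw [Finset.mem_Icc] at hy
    have h1 : ∀ i, (x i).natAbs ≤ (y i).natAbs := by
      intro i
      have a1 : a i ≤ y i := hy.1 i
      have a2 : y i ≤ b i := hy.2 i
      simp only [ha, hb] at a1 a2
      split_ifs at a1 a2 <;> omega
    have hlx : linf x ≤ linf y := by
      unfold linf
      exact Finset.sup_le fun i _ => le_trans (h1 i) (le_linf y i)
    have i0 : Fin d := ⟨0, hd⟩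
    have h2 : n / 2 + 1 ≤ linf y := by
      have a1 : a i0 ≤ y i0 := hy.1 i0
      have a2 : y i0 ≤ b i0 := hy.2 i0
      have h3 := le_linf y i0
      simp only [ha, hb] at a1 a2
      split_ifs at a1 a2 <;> omega
    have hM : q / 4 ≤ ((max (linf y) 1 : ℕ) : ℝ) := by
      have hy1 : ((linf x : ℕ) : ℝ) ≤ ((max (linf y) 1 : ℕ) : ℝ) := by
        exact_mod_cast le_trans hlx (le_max_left _ _)
      have hy2 : r / 4 ≤ ((max (linf y) 1 : ℕ) : ℝ) := by
        have hc : ((n / 2 + 1 : ℕ) : ℝ) ≤ ((max (linf y) 1 : ℕ) : ℝ) := by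
          exact_mod_cast le_trans h2 (le_max_left _ _)
        have h4 : r ≤ 4 * ((n / 2 + 1 : ℕ) : ℝ) := by
          have h5 : n + 1 ≤ 4 * (n / 2 + 1) := by omega
          have h6 := (Nat.cast_le (α := ℝ)).2 h5
          push_cast at h6 ⊢
          linarith
        linarith
      have h0 : (0 : ℝ) ≤ ((linf x : ℕ) : ℝ) := Nat.cast_nonneg _
      rcases le_total ((linf x : ℕ) : ℝ) r with h | h
      · rw [hqdef, max_eq_right h]
        linarith
      · rw [hqdef, max_eq_left h]
        linarith
    rw [nu]
    exact Real.rpow_le_rpow (by linarith) hM hα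
  have hcard : (Finset.Icc a b).card = (n - n / 2) ^ d := by
    rw [Pi.card_Icc]
    have h : ∀ i : Fin d, (Finset.Icc (a i) (b i)).card = n - n / 2 := by
      intro i
      rw [Int.card_Icc]
      simp only [ha, hb]
      split_ifs <;> omega
    rw [Finset.prod_congr rfl fun i _ => h i, Finset.prod_const, Finset.card_univ,
      Fintype.card_fin]
  have hcount : r / 4 ≤ ((n - n / 2 : ℕ) : ℝ) := by
    have h5 : n + 1 ≤ 4 * (n - n / 2) := by omega
    have h6 := (Nat.cast_le (α := ℝ)).2 h5
    push_cast at h6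
    linarith
  calc (r / 4) ^ d * (q / 4) ^ α ≤ ((n - n / 2 : ℕ) : ℝ) ^ d * (q / 4) ^ α := by
        exact mul_le_mul_of_nonneg_right (pow_le_pow_left₀ (by linarith) hcount d)
          (Real.rpow_nonneg (by linarith) α)
    _ ≤ ∑ y ∈ Finset.Icc a b, nu α y := by
        have h := Finset.card_nsmul_le_sum (Finset.Icc a b) (nu α) ((q / 4) ^ α) hval
        rw [hcard, nsmul_eq_mul] at h
        push_cast at h
        exact h
    _ ≤ ∑ y ∈ box x n, nu α y :=
        Finset.sum_le_sum_of_subset_of_nonneg hsub (fun y _ _ => nu_nonneg α y)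
    _ = V α x r := (V_eq α x r (by linarith)).symm

lemma UB_nonneg {α : ℝ} (hα : 0 ≤ α) (w : Fin d → ℤ) (R : ℝ) (hR : 1 ≤ R) :
    V α w R ≤ (3 * R) ^ d * (2 * max ((linf w : ℕ) : ℝ) R) ^ α := by
  set qw : ℝ := max ((linf w : ℕ) : ℝ) R with hqdef
  have hq1 : (1 : ℝ) ≤ qw := le_trans hR (le_max_right _ _)
  set n : ℕ := ⌊R⌋₊ with hn
  have hn1 : 1 ≤ n := Nat.le_floor (by exact_mod_cast hR)
  have hnR : (n : ℝ) ≤ R := Nat.floor_le (by linarith)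
  rw [V_eq α w R (by linarith)]
  have hval : ∀ y ∈ box w n, nu α y ≤ (2 * qw) ^ α := by
    intro y hy
    rw [mem_box] at hy
    have h1 : linf y ≤ linf w + n := by
      have e : y = w + (y - w) := by abel
      calc linf y = linf (w + (y - w)) := by rw [← e]
        _ ≤ linf w + linf (y - w) := linf_add_le w (y - w)
        _ ≤ linf w + n := Nat.add_le_add_left hy _
    have h2 : max (linf y) 1 ≤ linf w + n := by omega
    have h3 : ((max (linf y) 1 : ℕ) : ℝ) ≤ 2 * qw := by
      have h4 : ((max (linf y) 1 : ℕ) : ℝ) ≤ ((linf w : ℕ) : ℝ) + (n : ℝ) := by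
        exact_mod_cast h2
      have h5 : ((linf w : ℕ) : ℝ) ≤ qw := le_max_left _ _
      have h6 : (n : ℝ) ≤ qw := le_trans hnR (le_max_right _ _)
      linarith
    rw [nu]
    exact Real.rpow_le_rpow (Nat.cast_nonneg _) h3 hα
  calc ∑ y ∈ box w n, nu α y ≤ (box w n).card • (2 * qw) ^ α :=
        Finset.sum_le_card_nsmul _ _ _ hval
    _ = (((2 * n + 1) ^ d : ℕ) : ℝ) * (2 * qw) ^ α := by rw [card_box, nsmul_eq_mul]
    _ ≤ (3 * R) ^ d * (2 * qw) ^ α := by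
        refine mul_le_mul_of_nonneg_right ?_ (Real.rpow_nonneg (by linarith) α)
        have h7 : ((2 * n + 1 : ℕ) : ℝ) ≤ 3 * R := by push_cast; linarith
        calc (((2 * n + 1) ^ d : ℕ) : ℝ) = ((2 * n + 1 : ℕ) : ℝ) ^ d := by push_cast; ring
          _ ≤ (3 * R) ^ d := pow_le_pow_left₀ (Nat.cast_nonneg _) h7 d

end estimates

lemma sum_Icc_rpow {α : ℝ} (hα1 : -1 < α) (hα : α ≤ 0) (m : ℕ) (hm : 1 ≤ m) :
    ∑ k ∈ Finset.Icc 1 m, ((k : ℝ)) ^ α ≤ (1 + 1 / (α + 1)) * (m : ℝ) ^ (α + 1) := by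
  have hp : 0 < α + 1 := by linarith
  have hm1 : (1 : ℝ) ≤ (m : ℝ) := by exact_mod_cast hm
  have hX1 : (1 : ℝ) ≤ (m : ℝ) ^ (α + 1) := by
    calc (1:ℝ) = (1:ℝ) ^ (α+1) := (Real.one_rpow _).symm
      _ ≤ (m:ℝ) ^ (α+1) := Real.rpow_le_rpow zero_le_one hm1 (le_of_lt hp)
  have hmono : AntitoneOn (fun x : ℝ => x ^ α) (Set.Icc (1:ℝ) (1 + (m - 1 : ℕ))) := by
    intro s hs t ht hst
    exact Real.rpow_le_rpow_of_nonpos (lt_of_lt_of_le zero_lt_one hs.1) hst hα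
  have key := hmono.sum_le_integral
  have hc : (1 : ℝ) + ((m - 1 : ℕ) : ℝ) = (m : ℝ) := by
    rw [Nat.cast_sub hm]
    push_cast
    ring
  rw [hc] at key
  have hint : ∫ x in (1:ℝ)..(m:ℝ), x ^ α = ((m:ℝ) ^ (α+1) - 1) / (α+1) := by
    rw [integral_rpow (Or.inl hα1), Real.one_rpow]
  rw [hint] at key
  have split : ∑ k ∈ Finset.Icc 1 m, ((k:ℝ))^α
      = 1 + ∑ i ∈ Finset.range (m-1), ((1:ℝ) + ((i+1 : ℕ) : ℝ)) ^ α := by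
    rw [← Finset.Ico_add_one_right_eq_Icc, Finset.sum_Ico_eq_sum_range,
      show m + 1 - 1 = (m-1)+1 from by omega, Finset.sum_range_succ']
    rw [add_comm]
    norm_num
  rw [split]
  have h1 : ((m:ℝ)^(α+1) - 1)/(α+1) ≤ (m:ℝ)^(α+1) / (α+1) :=
    (div_le_div_iff_of_pos_right hp).mpr (by linarith)
  have hexp : (1 + 1/(α+1)) * (m:ℝ)^(α+1) = (m:ℝ)^(α+1) + (m:ℝ)^(α+1)/(α+1) := by
    field_simp
  linarith

lemma sum_int_Icc_le {α : ℝ} (hα1 : -1 < α) (hα : α ≤ 0) (m : ℕ) (hm : 1 ≤ m) :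
    ∑ t ∈ Finset.Icc (-(m:ℤ)) m, ((max t.natAbs 1 : ℕ) : ℝ) ^ α
      ≤ 3 * (1 + 1/(α+1)) * (m:ℝ) ^ (α+1) := by
  classical
  have hp : 0 < α + 1 := by linarith
  have hC2 : 2 ≤ 1 + 1/(α+1) := by
    have h : 1 ≤ 1/(α+1) := by rw [le_div_iff₀ hp]; linarith
    linarith
  have hX1 : (1:ℝ) ≤ (m:ℝ)^(α+1) := by
    calc (1:ℝ) = (1:ℝ)^(α+1) := (Real.one_rpow _).symm
      _ ≤ (m:ℝ)^(α+1) := Real.rpow_le_rpow zero_le_one (by exact_mod_cast hm) hp.le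
  set g : ℕ → ℝ := fun k => ((max k 1 : ℕ) : ℝ) ^ α with hg
  have hg0 : ∀ k, 0 ≤ g k := fun k => Real.rpow_nonneg (Nat.cast_nonneg _) _
  have step1 : ∑ t ∈ Finset.Icc (-(m:ℤ)) m, g t.natAbs
      ≤ ∑ b ∈ (Finset.Icc (-(m:ℤ)) m).image Int.natAbs, 2 * g b := by
    rw [Finset.sum_comp]
    refine Finset.sum_le_sum fun b _ => ?_
    have hcard : ((Finset.Icc (-(m:ℤ)) m).filter fun a => a.natAbs = b).card ≤ 2 := by
      have hsub2 : ((Finset.Icc (-(m:ℤ)) m).filter fun a => a.natAbs = b)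
          ⊆ {(b:ℤ), -(b:ℤ)} := by
        intro t ht
        simp only [Finset.mem_filter, Finset.mem_Icc] at ht
        simp only [Finset.mem_insert, Finset.mem_singleton]
        omega
      calc ((Finset.Icc (-(m:ℤ)) m).filter fun a => a.natAbs = b).card
          ≤ ({(b:ℤ), -(b:ℤ)} : Finset ℤ).card := Finset.card_le_card hsub2
        _ ≤ 2 := (Finset.card_insert_le _ _).trans (by simp)
    calc ((Finset.Icc (-(m:ℤ)) m).filter fun a => a.natAbs = b).card • g b ≤ 2 • g b :=
          nsmul_le_nsmul_left (hg0 b) hcard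
      _ = 2 * g b := by rw [nsmul_eq_mul]; norm_num
  have step2 : ∑ b ∈ (Finset.Icc (-(m:ℤ)) m).image Int.natAbs, 2 * g b
      ≤ ∑ b ∈ Finset.Icc 0 m, 2 * g b := by
    refine Finset.sum_le_sum_of_subset_of_nonneg ?_
      (fun b _ _ => mul_nonneg (by norm_num) (hg0 b))
    intro b hb
    simp only [Finset.mem_image, Finset.mem_Icc] at hb ⊢
    obtain ⟨t, ht, rfl⟩ := hb
    omega
  have hins : Finset.Icc 0 m = insert 0 (Finset.Icc 1 m) := by
    ext k
    simp only [Finset.mem_Icc, Finset.mem_insert]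
    omega
  have step3 : ∑ b ∈ Finset.Icc 0 m, 2 * g b
      = 2 + 2 * ∑ k ∈ Finset.Icc 1 m, ((k:ℝ))^α := by
    rw [hins, Finset.sum_insert (by simp [Finset.mem_Icc])]
    have hg0eq : g 0 = 1 := by simp [hg]
    have hsum : ∑ b ∈ Finset.Icc 1 m, 2 * g b = 2 * ∑ k ∈ Finset.Icc 1 m, ((k:ℝ))^α := by
      rw [← Finset.mul_sum]
      congr 1
      refine Finset.sum_congr rfl fun k hk => ?_
      simp only [Finset.mem_Icc] at hk
      rw [hg]
      simp only []
      rw [max_eq_left hk.1]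
    rw [hg0eq, hsum]
    ring
  have final := sum_Icc_rpow hα1 hα m hm
  have h2 : (2:ℝ) ≤ (1 + 1/(α+1)) * (m:ℝ)^(α+1) := by
    calc (2:ℝ) = 2 * 1 := by ring
      _ ≤ (1 + 1/(α+1)) * (m:ℝ)^(α+1) := mul_le_mul hC2 hX1 zero_le_one (by linarith)
  calc ∑ t ∈ Finset.Icc (-(m:ℤ)) m, g t.natAbs
      ≤ ∑ b ∈ (Finset.Icc (-(m:ℤ)) m).image Int.natAbs, 2 * g b := step1
    _ ≤ ∑ b ∈ Finset.Icc 0 m, 2 * g b := step2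
    _ = 2 + 2 * ∑ k ∈ Finset.Icc 1 m, ((k:ℝ))^α := step3
    _ ≤ 3 * (1 + 1/(α+1)) * (m:ℝ)^(α+1) := by linarith

lemma sum_proj {d : ℕ} (hd : 1 ≤ d) (t₀ : Finset ℤ) (g : ℤ → ℝ) :
    ∑ y ∈ Fintype.piFinset (fun _ : Fin d => t₀), g (y ⟨0, hd⟩)
      = (t₀.card : ℝ) ^ (d - 1) * ∑ s ∈ t₀, g s := by
  classical
  set i0 : Fin d := ⟨0, hd⟩
  have h1 : ∀ y : Fin d → ℤ, g (y i0) = ∏ i, (if i = i0 then g (y i) else 1) := by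
    intro y
    rw [Finset.prod_ite_eq' Finset.univ i0 (fun i => g (y i))]
    simp
  calc ∑ y ∈ Fintype.piFinset (fun _ : Fin d => t₀), g (y i0)
      = ∑ y ∈ Fintype.piFinset (fun _ : Fin d => t₀), ∏ i, (if i = i0 then g (y i) else 1) :=
        Finset.sum_congr rfl fun y _ => h1 y
    _ = ∏ i : Fin d, ∑ s ∈ t₀, (if i = i0 then g s else 1) :=
        (Finset.prod_univ_sum (fun _ : Fin d => t₀) (fun i s => if i = i0 then g s else 1)).symm
    _ = (∑ s ∈ t₀, g s) * ∏ i ∈ Finset.univ.erase i0, ∑ s ∈ t₀, (if i = i0 then g s else 1) := by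
        rw [← Finset.mul_prod_erase Finset.univ _ (Finset.mem_univ i0)]
        simp
    _ = (∑ s ∈ t₀, g s) * (t₀.card : ℝ) ^ (d - 1) := by
        congr 1
        have h2 : ∀ i ∈ Finset.univ.erase i0,
            (∑ s ∈ t₀, if i = i0 then g s else 1) = (t₀.card : ℝ) := by
          intro i hi
          rw [Finset.mem_erase] at hi
          simp [hi.1]
        rw [Finset.prod_congr rfl h2, Finset.prod_const,
          Finset.card_erase_of_mem (Finset.mem_univ _), Finset.card_univ, Fintype.card_fin]
    _ = (t₀.card : ℝ) ^ (d - 1) * ∑ s ∈ t₀, g s := by ring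

lemma box_zero_eq {d : ℕ} (m : ℕ) : box (0 : Fin d → ℤ) m
    = Fintype.piFinset (fun _ : Fin d => Finset.Icc (-(m:ℤ)) m) := by
  ext y
  rw [mem_box, linf_le_iff, Fintype.mem_piFinset]
  apply forall_congr'
  intro i
  rw [Finset.mem_Icc]
  simp only [Pi.sub_apply, Pi.zero_apply, sub_zero]
  omega

lemma half_le_two_rpow {α : ℝ} (hα1 : -1 ≤ α) : (1/2 : ℝ) ≤ (2:ℝ) ^ α := by
  have h6 : (2:ℝ) ^ (-1:ℝ) ≤ (2:ℝ) ^ α :=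
    Real.rpow_le_rpow_of_exponent_le (by norm_num) hα1
  rw [Real.rpow_neg_one] at h6
  norm_num at h6
  linarith

lemma UB_nonpos {d : ℕ} {α : ℝ} (hα1 : -1 < α) (hα : α ≤ 0) (hd : 1 ≤ d) (w : Fin d → ℤ)
    (R : ℝ) (hR : 1 ≤ R) :
    V α w R ≤ (1 + 1/(α+1)) * 100 ^ d * (R ^ d * (max ((linf w : ℕ) : ℝ) R) ^ α) := by
  classical
  have hp : 0 < α + 1 := by linarith
  have hC2 : 2 ≤ 1 + 1/(α+1) := by
    have h : 1 ≤ 1/(α+1) := by rw [le_div_iff₀ hp]; linarith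
    linarith
  set C : ℝ := 1 + 1/(α+1) with hC
  set qw : ℝ := max ((linf w : ℕ) : ℝ) R with hqdef
  have hq1 : (1:ℝ) ≤ qw := le_trans hR (le_max_right _ _)
  have hqpos : (0:ℝ) < qw := by linarith
  have hqa : (0:ℝ) ≤ qw ^ α := Real.rpow_nonneg (le_of_lt hqpos) _
  set n : ℕ := ⌊R⌋₊ with hn
  have hn1 : 1 ≤ n := Nat.le_floor (by exact_mod_cast hR)
  have hnR : (n : ℝ) ≤ R := Nat.floor_le (by linarith)
  have hRn : R < (n : ℝ) + 1 := Nat.lt_floor_add_one R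
  have hRpos : (0:ℝ) < R := by linarith
  rw [V_eq α w R (by linarith)]
  rcases le_or_gt (2 * n) (linf w) with hw | hw
  · -- far case : qw = linf w and every point of the box has big norm
    have h2nR : R ≤ 2 * (n:ℝ) := by
      have : ((n + 1 : ℕ) : ℝ) ≤ ((2 * n : ℕ) : ℝ) := by
        exact_mod_cast (by omega : n + 1 ≤ 2 * n)
      push_cast at this
      linarith
    have hlwR : R ≤ ((linf w : ℕ) : ℝ) := by
      have : ((2 * n : ℕ) : ℝ) ≤ ((linf w : ℕ) : ℝ) := by exact_mod_cast hw
      push_cast at this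
      linarith
    have hqw : qw = ((linf w : ℕ) : ℝ) := max_eq_left hlwR
    have hval : ∀ y ∈ box w n, nu α y ≤ 2 * qw ^ α := by
      intro y hy
      rw [mem_box] at hy
      have h1 : linf w ≤ linf y + n := by
        have e : w = y + (w - y) := by abel
        calc linf w = linf (y + (w - y)) := by rw [← e]
          _ ≤ linf y + linf (w - y) := linf_add_le _ _
          _ ≤ linf y + n := by
              rw [linf_sub_comm]
              exact Nat.add_le_add_left hy _
      have h2 : linf w ≤ 2 * max (linf y) 1 := by omega
      have h3 : qw / 2 ≤ ((max (linf y) 1 : ℕ) : ℝ) := by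
        rw [hqw]
        have h4 : ((linf w : ℕ) : ℝ) ≤ 2 * ((max (linf y) 1 : ℕ) : ℝ) := by
          exact_mod_cast h2
        linarith
      have h4 : nu α y ≤ (qw / 2) ^ α := by
        rw [nu]
        exact Real.rpow_le_rpow_of_nonpos (by linarith) h3 hα
      have h5 : (qw / 2) ^ α ≤ 2 * qw ^ α := by
        rw [Real.div_rpow (le_of_lt hqpos) (by norm_num)]
        have h6 := half_le_two_rpow (le_of_lt hα1)
        have h8 : (0:ℝ) < (2:ℝ) ^ α := Real.rpow_pos_of_pos (by norm_num) _
        rw [div_le_iff₀ h8]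
        nlinarith
      exact le_trans h4 h5
    calc ∑ y ∈ box w n, nu α y ≤ (box w n).card • (2 * qw ^ α) :=
          Finset.sum_le_card_nsmul _ _ _ hval
      _ = (((2 * n + 1) ^ d : ℕ) : ℝ) * (2 * qw ^ α) := by rw [card_box, nsmul_eq_mul]
      _ ≤ 3 ^ d * R ^ d * (2 * qw ^ α) := by
          refine mul_le_mul_of_nonneg_right ?_ (by linarith)
          have h7 : ((2 * n + 1 : ℕ) : ℝ) ≤ 3 * R := by push_cast; linarith
          calc (((2 * n + 1) ^ d : ℕ) : ℝ) = ((2 * n + 1 : ℕ) : ℝ) ^ d := by push_cast; ring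
            _ ≤ (3 * R) ^ d := pow_le_pow_left₀ (Nat.cast_nonneg _) h7 d
            _ = 3 ^ d * R ^ d := mul_pow 3 R d
      _ = (2 * 3 ^ d) * (R ^ d * qw ^ α) := by ring
      _ ≤ (C * 100 ^ d) * (R ^ d * qw ^ α) := by
          refine mul_le_mul_of_nonneg_right ?_
            (mul_nonneg (le_of_lt (pow_pos hRpos d)) hqa)
          have h9 : (3:ℝ) ^ d ≤ 100 ^ d := pow_le_pow_left₀ (by norm_num) (by norm_num) d
          nlinarith [pow_pos (show (0:ℝ) < 3 by norm_num) d]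
      _ = C * 100 ^ d * (R ^ d * qw ^ α) := by ring
  · -- near case
    set m : ℕ := 3 * n with hm
    have hm1 : 1 ≤ m := by omega
    have hsub : box w n ⊆ box 0 m := by
      intro y hy
      rw [mem_box] at hy ⊢
      have h1 : linf y ≤ linf w + n := by
        have e : y = w + (y - w) := by abel
        calc linf y = linf (w + (y - w)) := by rw [← e]
          _ ≤ linf w + linf (y - w) := linf_add_le _ _
          _ ≤ linf w + n := Nat.add_le_add_left hy _
      have h2 : y - 0 = y := by simp
      rw [h2]
      omega
    set i0 : Fin d := ⟨0, hd⟩ with hi0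
    have hval : ∀ y ∈ box 0 m, nu α y ≤ ((max (y i0).natAbs 1 : ℕ) : ℝ) ^ α := by
      intro y _
      rw [nu]
      refine Real.rpow_le_rpow_of_nonpos ?_ ?_ hα
      · have : (1:ℕ) ≤ max (y i0).natAbs 1 := le_max_right _ _
        exact_mod_cast lt_of_lt_of_le zero_lt_one (by exact_mod_cast this)
      · have : max (y i0).natAbs 1 ≤ max (linf y) 1 :=
          max_le_max (le_linf y i0) le_rfl
        exact_mod_cast this
    have hcardIcc : (Finset.Icc (-(m:ℤ)) m).card = 2 * m + 1 := by
      rw [Int.card_Icc]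
      omega
    have hproj : ∑ y ∈ box 0 m, ((max (y i0).natAbs 1 : ℕ) : ℝ) ^ α
        = ((2 * m + 1 : ℕ) : ℝ) ^ (d - 1)
          * ∑ t ∈ Finset.Icc (-(m:ℤ)) m, ((max t.natAbs 1 : ℕ) : ℝ) ^ α := by
      rw [box_zero_eq, sum_proj hd _ (fun t => ((max t.natAbs 1 : ℕ) : ℝ) ^ α), hcardIcc]
    have hCpos : (0:ℝ) < C := by linarith
    have hsum1 := sum_int_Icc_le hα1 hα m hm1
    -- numeric facts
    have hmR : (m : ℝ) ≤ 3 * R := by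
      have : (n:ℝ) ≤ R := hnR
      push_cast [hm]
      linarith
    have h2m : ((2 * m + 1 : ℕ) : ℝ) ≤ 7 * R := by push_cast [hm]; linarith
    have hqw2R : qw ≤ 2 * R := by
      refine max_le ?_ (by linarith)
      have : ((linf w : ℕ) : ℝ) ≤ ((2 * n : ℕ) : ℝ) := by exact_mod_cast le_of_lt hw
      push_cast at this
      linarith
    have hRα : R ^ α ≤ 2 * qw ^ α := by
      have h1 : (2 * R) ^ α ≤ qw ^ α :=
        Real.rpow_le_rpow_of_nonpos hqpos hqw2R hα
      have h2 : (2 * R) ^ α = 2 ^ α * R ^ α := Real.mul_rpow (by norm_num) (by linarith)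
      have h3 := half_le_two_rpow (le_of_lt hα1)
      have h4 : (0:ℝ) < R ^ α := Real.rpow_pos_of_pos hRpos _
      have h5 : (1/2) * R ^ α ≤ 2 ^ α * R ^ α := mul_le_mul_of_nonneg_right h3 h4.le
      rw [h2] at h1
      linarith
    have hmpow : (m:ℝ) ^ (α+1) ≤ 3 * R ^ (α+1) := by
      have h1 : (m:ℝ) ^ (α+1) ≤ (3*R) ^ (α+1) :=
        Real.rpow_le_rpow (Nat.cast_nonneg _) hmR hp.le
      have h2 : ((3:ℝ)*R) ^ (α+1) = 3 ^ (α+1) * R ^ (α+1) :=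
        Real.mul_rpow (by norm_num) (by linarith)
      have h3 : (3:ℝ) ^ (α+1) ≤ 3 ^ (1:ℝ) :=
        Real.rpow_le_rpow_of_exponent_le (by norm_num) (by linarith)
      have h4 : (0:ℝ) < R ^ (α+1) := Real.rpow_pos_of_pos hRpos _
      rw [Real.rpow_one] at h3
      calc (m:ℝ) ^ (α+1) ≤ (3*R) ^ (α+1) := h1
        _ = 3 ^ (α+1) * R ^ (α+1) := h2
        _ ≤ 3 * R ^ (α+1) := mul_le_mul_of_nonneg_right h3 h4.le
    have hpowd : R ^ d = R ^ (d-1) * R := by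
      rw [← pow_succ]
      congr 1
      omega
    have hRsplit : R ^ (α + 1) * R ^ (d-1) = R ^ d * R ^ α := by
      rw [Real.rpow_add_one (ne_of_gt hRpos), hpowd]
      ring
    have h2mpow : ((2 * m + 1 : ℕ) : ℝ) ^ (d-1) ≤ 7 ^ (d-1) * R ^ (d-1) := by
      calc ((2 * m + 1 : ℕ) : ℝ) ^ (d-1) ≤ (7*R) ^ (d-1) :=
            pow_le_pow_left₀ (Nat.cast_nonneg _) h2m _
        _ = 7 ^ (d-1) * R ^ (d-1) := mul_pow _ _ _
    have hRd1 : (0:ℝ) < R ^ (d-1) := pow_pos hRpos _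
    have hRa1 : (0:ℝ) < R ^ (α+1) := Real.rpow_pos_of_pos hRpos _
    calc ∑ y ∈ box w n, nu α y ≤ ∑ y ∈ box 0 m, nu α y :=
          Finset.sum_le_sum_of_subset_of_nonneg hsub (fun y _ _ => nu_nonneg α y)
      _ ≤ ∑ y ∈ box 0 m, ((max (y i0).natAbs 1 : ℕ) : ℝ) ^ α := Finset.sum_le_sum hval
      _ = ((2 * m + 1 : ℕ) : ℝ) ^ (d - 1)
            * ∑ t ∈ Finset.Icc (-(m:ℤ)) m, ((max t.natAbs 1 : ℕ) : ℝ) ^ α := hproj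
      _ ≤ ((2 * m + 1 : ℕ) : ℝ) ^ (d - 1) * (3 * C * (m:ℝ) ^ (α+1)) := by
          refine mul_le_mul_of_nonneg_left hsum1 ?_
          positivity
      _ ≤ (7 ^ (d-1) * R ^ (d-1)) * (3 * C * (3 * R ^ (α+1))) := by
          refine mul_le_mul h2mpow (mul_le_mul_of_nonneg_left hmpow ?_) ?_ (by positivity)
          · exact mul_nonneg (by norm_num) (le_of_lt hCpos)
          · exact mul_nonneg (mul_nonneg (by norm_num) (le_of_lt hCpos))
              (Real.rpow_nonneg (Nat.cast_nonneg _) _)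
      _ = (9 * C * 7 ^ (d-1)) * (R ^ (α+1) * R ^ (d-1)) := by ring
      _ = (9 * C * 7 ^ (d-1)) * (R ^ d * R ^ α) := by rw [hRsplit]
      _ ≤ (9 * C * 7 ^ (d-1)) * (R ^ d * (2 * qw ^ α)) := by
          refine mul_le_mul_of_nonneg_left ?_ (by positivity)
          refine mul_le_mul_of_nonneg_left hRα (le_of_lt (pow_pos hRpos d))
      _ = (18 * 7 ^ (d-1)) * C * (R ^ d * qw ^ α) := by ring
      _ ≤ 100 ^ d * C * (R ^ d * qw ^ α) := by
          refine mul_le_mul_of_nonneg_right ?_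
            (mul_nonneg (le_of_lt (pow_pos hRpos d)) hqa)
          refine mul_le_mul_of_nonneg_right ?_ (le_of_lt hCpos)
          calc (18:ℝ) * 7 ^ (d-1) ≤ 100 * 100 ^ (d-1) := by
                have : (7:ℝ) ^ (d-1) ≤ 100 ^ (d-1) :=
                  pow_le_pow_left₀ (by norm_num) (by norm_num) _
                nlinarith [pow_pos (show (0:ℝ) < 7 by norm_num) (d-1)]
            _ = 100 ^ d := by
                rw [← pow_succ']
                congr 1
                omega
      _ = C * 100 ^ d * (R ^ d * qw ^ α) := by ring

lemma linf_le_linf_add_linf {d : ℕ} (x w : Fin d → ℤ) : linf x ≤ linf w + linf (x - w) := by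
  have e : x = w + (x - w) := by abel
  calc linf x = linf (w + (x - w)) := by rw [← e]
    _ ≤ linf w + linf (x - w) := linf_add_le _ _

lemma V_one_nonneg_bound {d : ℕ} {α : ℝ} (hα : 0 ≤ α) (x : Fin d → ℤ) :
    V α x 1 ≤ 3 ^ d * 2 ^ α * nu α x := by
  rw [V_eq α x 1 zero_le_one, Nat.floor_one]
  have hval : ∀ y ∈ box x 1, nu α y ≤ 2 ^ α * nu α x := by
    intro y hy
    rw [mem_box] at hy
    have h1 : linf y ≤ linf x + 1 := by
      calc linf y ≤ linf x + linf (y - x) := linf_le_linf_add_linf y x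
        _ ≤ linf x + 1 := Nat.add_le_add_left hy _
    have h2 : max (linf y) 1 ≤ 2 * max (linf x) 1 := by omega
    have h3 : ((max (linf y) 1 : ℕ) : ℝ) ≤ 2 * ((max (linf x) 1 : ℕ) : ℝ) := by
      exact_mod_cast h2
    rw [nu, nu]
    calc ((max (linf y) 1 : ℕ) : ℝ) ^ α ≤ (2 * ((max (linf x) 1 : ℕ) : ℝ)) ^ α :=
          Real.rpow_le_rpow (Nat.cast_nonneg _) h3 hα
      _ = 2 ^ α * ((max (linf x) 1 : ℕ) : ℝ) ^ α :=
          Real.mul_rpow (by norm_num) (Nat.cast_nonneg _)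
  calc ∑ y ∈ box x 1, nu α y ≤ (box x 1).card • (2 ^ α * nu α x) :=
        Finset.sum_le_card_nsmul _ _ _ hval
    _ = (((2 * 1 + 1) ^ d : ℕ) : ℝ) * (2 ^ α * nu α x) := by rw [card_box, nsmul_eq_mul]
    _ = 3 ^ d * 2 ^ α * nu α x := by push_cast; ring

lemma V_one_nonpos_bound {d : ℕ} {α : ℝ} (hα1 : -1 < α) (hα : α ≤ 0) (x : Fin d → ℤ) :
    V α x 1 ≤ 3 ^ d * 2 * nu α x := by
  rw [V_eq α x 1 zero_le_one, Nat.floor_one]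
  have hval : ∀ y ∈ box x 1, nu α y ≤ 2 * nu α x := by
    intro y hy
    rw [mem_box] at hy
    have h1 : linf x ≤ linf y + 1 := by
      calc linf x ≤ linf y + linf (x - y) := linf_le_linf_add_linf x y
        _ ≤ linf y + 1 := by rw [linf_sub_comm]; exact Nat.add_le_add_left hy _
    have h2 : max (linf x) 1 ≤ 2 * max (linf y) 1 := by omega
    have h3 : ((max (linf x) 1 : ℕ) : ℝ) / 2 ≤ ((max (linf y) 1 : ℕ) : ℝ) := by
      have h4 := (Nat.cast_le (α := ℝ)).2 h2
      push_cast at h4 ⊢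
      linarith
    have hb : (0:ℝ) < ((max (linf x) 1 : ℕ) : ℝ) / 2 := by
      have := one_le_M x
      linarith
    rw [nu, nu]
    calc ((max (linf y) 1 : ℕ) : ℝ) ^ α ≤ (((max (linf x) 1 : ℕ) : ℝ) / 2) ^ α :=
          Real.rpow_le_rpow_of_nonpos hb h3 hα
      _ = ((max (linf x) 1 : ℕ) : ℝ) ^ α / 2 ^ α :=
          Real.div_rpow (Nat.cast_nonneg _) (by norm_num : (0:ℝ) ≤ 2) α
      _ ≤ 2 * ((max (linf x) 1 : ℕ) : ℝ) ^ α := by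
          have h6 := half_le_two_rpow (le_of_lt hα1)
          have h7 : (0:ℝ) < 2 ^ α := Real.rpow_pos_of_pos (by norm_num) α
          have h8 : (0:ℝ) ≤ ((max (linf x) 1 : ℕ) : ℝ) ^ α :=
            Real.rpow_nonneg (Nat.cast_nonneg _) _
          rw [div_le_iff₀ h7]
          nlinarith
  calc ∑ y ∈ box x 1, nu α y ≤ (box x 1).card • (2 * nu α x) :=
        Finset.sum_le_card_nsmul _ _ _ hval
    _ = (((2 * 1 + 1) ^ d : ℕ) : ℝ) * (2 * nu α x) := by rw [card_box, nsmul_eq_mul]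
    _ = 3 ^ d * 2 * nu α x := by push_cast; ring

lemma package {d : ℕ} {α : ℝ} (c₀ D : ℝ) (hc0 : 0 < c₀) (hD : 1 ≤ D)
    (main : ∀ (w : Fin d → ℤ) (R : ℝ), 1 ≤ R → ∀ x : Fin d → ℤ,
      ((linf (x - w) : ℕ) : ℝ) ≤ R →
      ∀ r : ℝ, 1 ≤ r → r ≤ R → V α w R ≤ c₀ * (R / r) ^ c₀ * V α x r)
    (hone : ∀ x : Fin d → ℤ, V α x 1 ≤ D * nu α x) :
    ∃ c₁ : ℝ, 0 < c₁ ∧ ∀ (w : Fin d → ℤ) (R : ℝ), 1 ≤ R →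
        ∀ x : Fin d → ℤ, ((linf (x - w) : ℕ) : ℝ) ≤ R →
          (∀ r : ℝ, 1 ≤ r → r ≤ R → V α w R ≤ c₁ * (R / r) ^ c₁ * V α x r) ∧
            V α w R ≤ c₁ * R ^ c₁ * nu α x := by
  refine ⟨c₀ * D + c₀, by nlinarith, ?_⟩
  intro w R hR x hxw
  have hRpos : (0:ℝ) < R := by linarith
  have hc1 : c₀ ≤ c₀ * D + c₀ := by nlinarith
  have hc1pos : (0:ℝ) < c₀ * D + c₀ := by nlinarith
  constructor
  · intro r hr1 hrR
    have hrpos : (0:ℝ) < r := by linarith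
    have hrr : (1:ℝ) ≤ R / r := (one_le_div hrpos).mpr hrR
    have hV : 0 ≤ V α x r := V_nonneg α x r (by linarith)
    have h2 : (R/r) ^ c₀ ≤ (R/r) ^ (c₀ * D + c₀) :=
      Real.rpow_le_rpow_of_exponent_le hrr hc1
    have h3 : 0 ≤ (R/r) ^ c₀ := Real.rpow_nonneg (by linarith) _
    calc V α w R ≤ c₀ * (R/r) ^ c₀ * V α x r := main w R hR x hxw r hr1 hrR
      _ ≤ (c₀ * D + c₀) * (R/r) ^ (c₀ * D + c₀) * V α x r := by
          refine mul_le_mul_of_nonneg_right ?_ hV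
          exact mul_le_mul hc1 h2 h3 (le_of_lt hc1pos)
  · have h1 := main w R hR x hxw 1 le_rfl hR
    rw [div_one] at h1
    have h2 := hone x
    have hnu : 0 ≤ nu α x := nu_nonneg α x
    have hr3 : 0 ≤ R ^ c₀ := Real.rpow_nonneg (by linarith) _
    have h4 : R ^ c₀ ≤ R ^ (c₀ * D + c₀) := Real.rpow_le_rpow_of_exponent_le hR hc1
    calc V α w R ≤ c₀ * R ^ c₀ * V α x 1 := h1
      _ ≤ c₀ * R ^ c₀ * (D * nu α x) :=
          mul_le_mul_of_nonneg_left h2 (mul_nonneg hc0.le hr3)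
      _ = (c₀ * D) * R ^ c₀ * nu α x := by ring
      _ ≤ (c₀ * D + c₀) * R ^ (c₀ * D + c₀) * nu α x := by
          refine mul_le_mul_of_nonneg_right ?_ hnu
          exact mul_le_mul (by nlinarith) h4 hr3 (le_of_lt hc1pos)


/-- There is `c₁ > 0`, depending only on `α` and `d`, such that
for every `w ∈ ℤ^d`, real `R ≥ 1`, `x ∈ B(w,R)` and real `r ∈ [1,R]`,
`V(w,R) ≤ c₁ (R/r)^{c₁} V(x,r)`; in particular `V(w,R) ≤ c₁ R^{c₁} ν_x`. -/
theorem volume_doubling (d : ℕ) (hd : 1 ≤ d) (α : ℝ) (hα : -1 < α) :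
    ∃ c₁ : ℝ, 0 < c₁ ∧
      ∀ (w : Fin d → ℤ) (R : ℝ), 1 ≤ R →
        ∀ x : Fin d → ℤ, ((linf (x - w) : ℕ) : ℝ) ≤ R →
          (∀ r : ℝ, 1 ≤ r → r ≤ R → V α w R ≤ c₁ * (R / r) ^ c₁ * V α x r) ∧
            V α w R ≤ c₁ * R ^ c₁ * nu α x := by
  rcases le_total 0 α with hs | hs
  · -- case 0 ≤ α
    have h16 : (0:ℝ) < 12 ^ d * 16 ^ α := by positivity
    have hd0 : (0:ℝ) ≤ (d:ℝ) := Nat.cast_nonneg d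
    refine package (12 ^ d * 16 ^ α + d + α + 1) (3 ^ d * 2 ^ α)
      (by linarith) ?_ ?_ (fun x => V_one_nonneg_bound hs x)
    · have h1 : (1:ℝ) ≤ 3 ^ d := one_le_pow₀ (by norm_num)
      have h2 : (1:ℝ) ≤ 2 ^ α := by
        calc (1:ℝ) = (1:ℝ) ^ α := (Real.one_rpow α).symm
          _ ≤ 2 ^ α := Real.rpow_le_rpow zero_le_one one_le_two hs
      nlinarith
    · intro w R hR x hxw r hr1 hrR
      have hrpos : (0:ℝ) < r := by linarith
      have hRpos : (0:ℝ) < R := by linarith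
      have hrr : (1:ℝ) ≤ R / r := (one_le_div hrpos).mpr hrR
      have hXpos : (0:ℝ) < R / r := by linarith
      set qw : ℝ := max ((linf w : ℕ) : ℝ) R with hqw
      set qx : ℝ := max ((linf x : ℕ) : ℝ) r with hqx
      have hqx1 : (1:ℝ) ≤ qx := le_trans hr1 (le_max_right _ _)
      have hqw1 : (1:ℝ) ≤ qw := le_trans hR (le_max_right _ _)
      have hcomp : qw ≤ 2 * ((R/r) * qx) := by
        have h2 : linf w ≤ linf x + linf (w - x) := linf_le_linf_add_linf w x
        have h3 : ((linf (w - x) : ℕ) : ℝ) ≤ R := by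
          rw [linf_sub_comm]
          exact hxw
        have h4 : ((linf w : ℕ):ℝ) ≤ ((linf x:ℕ):ℝ) + ((linf (w - x):ℕ):ℝ) := by
          exact_mod_cast h2
        have h6 : R ≤ (R/r) * qx := by
          calc R = (R/r) * r := by field_simp
            _ ≤ (R/r) * qx := mul_le_mul_of_nonneg_left (le_max_right _ _) (by linarith)
        have h7 : qx ≤ (R/r) * qx := le_mul_of_one_le_left (by linarith) hrr
        have h8 : ((linf x:ℕ):ℝ) ≤ qx := le_max_left _ _
        exact max_le (by linarith) (by linarith)
      have hUB := UB_nonneg hs w R hR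
      have hLB := LB_nonneg hs hd x r hr1
      calc V α w R ≤ (3*R)^d * (2*qw)^α := hUB
        _ ≤ (3*R)^d * ((16*(R/r))^α * (qx/4)^α) := by
            refine mul_le_mul_of_nonneg_left ?_ (pow_nonneg (by linarith) d)
            rw [← Real.mul_rpow (by linarith : (0:ℝ) ≤ 16*(R/r)) (by linarith : (0:ℝ) ≤ qx/4)]
            refine Real.rpow_le_rpow (by linarith) ?_ hs
            calc 2*qw ≤ 4*((R/r)*qx) := by linarith
              _ = 16*(R/r)*(qx/4) := by ring
        _ = (12^d * 16^α) * (((R/r)^d * (R/r)^α) * ((r/4)^d * (qx/4)^α)) := by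
            rw [Real.mul_rpow (by norm_num : (0:ℝ) ≤ 16) (by linarith : (0:ℝ) ≤ R/r)]
            have h9 : ((3:ℝ)*R)^d = (12 * ((R/r) * (r/4)))^d := by
              congr 1
              field_simp
              ring
            rw [h9, mul_pow 12 ((R/r) * (r/4)) d, mul_pow (R/r) (r/4) d]
            ring
        _ ≤ (12^d * 16^α) * (((R/r)^d * (R/r)^α) * V α x r) := by
            refine mul_le_mul_of_nonneg_left ?_ (le_of_lt h16)
            exact mul_le_mul_of_nonneg_left hLB
              (mul_nonneg (pow_nonneg (by linarith) d) (Real.rpow_nonneg (by linarith) α))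
        _ ≤ (12^d*16^α + d + α + 1) * (R/r)^(12^d*16^α + d + α + 1) * V α x r := by
            have hVp : 0 ≤ V α x r := V_nonneg α x r (by linarith)
            have he1 : (R/r)^d * (R/r)^α = (R/r)^((d:ℝ)+α) := by
              rw [Real.rpow_add hXpos, Real.rpow_natCast]
            have hexp : (R/r)^((d:ℝ)+α) ≤ (R/r)^(12^d*16^α + d + α + 1) :=
              Real.rpow_le_rpow_of_exponent_le hrr (by linarith)
            have hnn : (0:ℝ) ≤ (R/r)^((d:ℝ)+α) := Real.rpow_nonneg (by linarith) _
            calc (12^d * 16^α) * (((R/r)^d * (R/r)^α) * V α x r)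
                = ((12^d * 16^α) * (R/r)^((d:ℝ)+α)) * V α x r := by rw [he1]; ring
              _ ≤ ((12^d*16^α + d + α + 1) * (R/r)^(12^d*16^α + d + α + 1)) * V α x r := by
                  refine mul_le_mul_of_nonneg_right ?_ hVp
                  exact mul_le_mul (by linarith) hexp hnn (by linarith)
              _ = (12^d*16^α + d + α + 1) * (R/r)^(12^d*16^α + d + α + 1) * V α x r := by
                  ring
  · -- case α ≤ 0
    have hp : (0:ℝ) < α + 1 := by linarith
    have hd0 : (0:ℝ) ≤ (d:ℝ) := Nat.cast_nonneg d
    set K : ℝ := (1 + 1/(α+1)) * 100 ^ d with hK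
    have hC2 : (2:ℝ) ≤ 1 + 1/(α+1) := by
      have h : (1:ℝ) ≤ 1/(α+1) := by
        rw [le_div_iff₀ hp]
        linarith
      linarith
    have h100 : (0:ℝ) < 100 ^ d := by positivity
    have h100' : (1:ℝ) ≤ 100 ^ d := one_le_pow₀ (by norm_num)
    have hKpos : (0:ℝ) < K := by nlinarith
    have hK2 : (2:ℝ) ≤ K := by nlinarith
    refine package (2*K + d + 1) (3^d*2) (by linarith) ?_ ?_
      (fun x => V_one_nonpos_bound hα hs x)
    · have h1 : (1:ℝ) ≤ 3 ^ d := one_le_pow₀ (by norm_num)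
      nlinarith
    · intro w R hR x hxw r hr1 hrR
      have hrpos : (0:ℝ) < r := by linarith
      have hRpos : (0:ℝ) < R := by linarith
      have hrr : (1:ℝ) ≤ R / r := (one_le_div hrpos).mpr hrR
      set qw : ℝ := max ((linf w : ℕ) : ℝ) R with hqw
      set qx : ℝ := max ((linf x : ℕ) : ℝ) r with hqx
      have hqx1 : (1:ℝ) ≤ qx := le_trans hr1 (le_max_right _ _)
      have hqw1 : (1:ℝ) ≤ qw := le_trans hR (le_max_right _ _)
      have hqxw : qx ≤ 2*qw := by
        have h2 : linf x ≤ linf w + linf (x - w) := linf_le_linf_add_linf x w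
        have h4 : ((linf x:ℕ):ℝ) ≤ ((linf w:ℕ):ℝ) + ((linf (x - w):ℕ):ℝ) := by
          exact_mod_cast h2
        have h5 : ((linf w:ℕ):ℝ) ≤ qw := le_max_left _ _
        have h6 : R ≤ qw := le_max_right _ _
        exact max_le (by linarith) (by linarith)
      have hqα : qw ^ α ≤ 2 * qx ^ α := by
        have h1 : (2*qw)^α ≤ qx^α :=
          Real.rpow_le_rpow_of_nonpos (by linarith) hqxw hs
        have h2 : (2*qw)^α = 2^α * qw^α := Real.mul_rpow (by norm_num) (by linarith)
        have h3 := half_le_two_rpow (le_of_lt hα)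
        have h4 : (0:ℝ) ≤ qw^α := Real.rpow_nonneg (by linarith) _
        have h5 : (1/2)*qw^α ≤ 2^α*qw^α := mul_le_mul_of_nonneg_right h3 h4
        rw [h2] at h1
        linarith
      have hUB := UB_nonpos hα hs hd w R hR
      have hLB := LB_nonpos hs x r hr1
      have hVp : 0 ≤ V α x r := V_nonneg α x r (by linarith)
      have hqxa : (0:ℝ) ≤ qx ^ α := Real.rpow_nonneg (by linarith) _
      have hRd : R^d = (R/r)^d * r^d := by
        rw [← mul_pow]
        congr 1
        field_simp
      calc V α w R ≤ K * (R^d * qw^α) := hUB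
        _ ≤ K * (R^d * (2*qx^α)) := by
            refine mul_le_mul_of_nonneg_left ?_ (le_of_lt hKpos)
            exact mul_le_mul_of_nonneg_left hqα (pow_nonneg (by linarith) d)
        _ = (2*K) * (R/r)^d * (r^d * qx^α) := by
            rw [hRd]
            ring
        _ ≤ (2*K) * (R/r)^d * V α x r := by
            refine mul_le_mul_of_nonneg_left hLB ?_
            exact mul_nonneg (by linarith) (pow_nonneg (by linarith) d)
        _ ≤ (2*K + d + 1) * (R/r)^(2*K + d + 1) * V α x r := by
            refine mul_le_mul_of_nonneg_right ?_ hVp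
            have he1 : ((R/r):ℝ)^d = (R/r)^((d:ℝ)) := (Real.rpow_natCast _ d).symm
            have hexp : (R/r)^((d:ℝ)) ≤ (R/r)^(2*K + d + 1) :=
              Real.rpow_le_rpow_of_exponent_le hrr (by linarith)
            have hnn : (0:ℝ) ≤ (R/r)^((d:ℝ)) := Real.rpow_nonneg (by linarith) _
            rw [he1]
            exact mul_le_mul (by linarith) hexp hnn (by linarith)
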